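/- For every integer N ≥ 2, every ω ∈ ℝ, and every λ ∈ ℂ, the characteristic determinant satisfies det(H^{(N)}(ω) − λ·I) = P_{N, 1+iω}(−λ/2). In particular, λ is an eigenvalue of H^{(N)}(ω) if and only if −λ/2 is a root of the secular polynomial P_{N,1+iω}. -/

import Mathlib

open Matrix

/-- The N×N non-Hermitian discrete square-well Hamiltonian `H^{(N)}(ω)`. -/
noncomputable def Hmat (N : ℕ) (ω : ℝ) : Matrix (Fin N) (Fin N) ℂ :=
  Matrix.of fun j k =>
    if (j : ℕ) = (k : ℕ) then
      (if (j : ℕ) = 0 then -1 - Complex.I * ω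
       else if (j : ℕ) = N - 1 then -1 + Complex.I * ω else 0)
    else if (j : ℕ) + 1 = (k : ℕ) ∨ (k : ℕ) + 1 = (j : ℕ) then -1 else 0

/-- Chebyshev polynomials of the second kind (as functions on ℂ). -/
noncomputable def chebU : ℕ → ℂ → ℂ
  | 0, _ => 1
  | 1, y => 2 * y
  | n + 2, y => 2 * y * chebU (n + 1) y - chebU n y

/-- The secular polynomial `P_{N,z}(y) = z·conj z·U_{N−2}(y) − (z+conj z)·U_{N−1}(y) + U_N(y)`. -/
noncomputable def Psec (N : ℕ) (z y : ℂ) : ℂ :=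
  z * starRingEnd ℂ z * chebU (N - 2) y
    - (z + starRingEnd ℂ z) * chebU (N - 1) y + chebU N y

/-! ### Auxiliary lemmas -/

noncomputable def Tmat (d : ℕ → ℂ) (n : ℕ) : Matrix (Fin n) (Fin n) ℂ :=
  Matrix.of fun i j =>
    if (i : ℕ) = (j : ℕ) then d i
    else if (i : ℕ) + 1 = (j : ℕ) ∨ (j : ℕ) + 1 = (i : ℕ) then -1 else 0

noncomputable def cont : ℕ → (ℕ → ℂ) → ℂ
  | 0, _ => 1
  | 1, d => d 0
  | n + 2, d => d 0 * cont (n + 1) (fun k => d (k + 1)) - cont n (fun k => d (k + 2))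

lemma hval (n : ℕ) (j : Fin (n+1)) : (((1 : Fin (n + 2)).succAbove j : Fin (n+2)) : ℕ)
    = if (j : ℕ) = 0 then 0 else (j : ℕ) + 1 := by
  by_cases h0 : (j : ℕ) = 0
  · have : j = 0 := Fin.ext h0
    subst this
    rw [if_pos h0]
    simp [Fin.succAbove, Fin.lt_def]
  · rw [if_neg h0]
    have h1 : ¬ ((j.castSucc : Fin (n + 2)) < 1) := by
      intro h; rw [Fin.lt_def] at h; simp only [Fin.val_castSucc, Fin.val_one] at h; omega
    simp [Fin.succAbove, h1]

lemma Tmat_sub_succ (d : ℕ → ℂ) (n : ℕ) :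
    (Tmat d (n + 1)).submatrix Fin.succ Fin.succ = Tmat (fun k => d (k + 1)) n := by
  ext i j
  simp only [Tmat, Matrix.submatrix_apply, Matrix.of_apply, Fin.val_succ]
  split_ifs <;> first | rfl | (exfalso; simp_all; omega) | (exfalso; simp_all) | (exfalso; omega)

lemma det_Tmat : ∀ (n : ℕ) (d : ℕ → ℂ), (Tmat d n).det = cont n d
  | 0, d => by simp [cont]
  | 1, d => by simp [cont, Tmat, Matrix.det_fin_one]
  | n + 2, d => by
    rw [Matrix.det_succ_row_zero, Fin.sum_univ_succ, Fin.sum_univ_succ]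
    have htail0 : ∀ i : Fin n,
        (-1 : ℂ) ^ (((i.succ.succ : Fin (n + 2))) : ℕ) * Tmat d (n + 2) 0 i.succ.succ *
          ((Tmat d (n + 2)).submatrix Fin.succ (i.succ.succ).succAbove).det = 0 := by
      intro i
      have h : Tmat d (n + 2) 0 i.succ.succ = 0 := by
        simp only [Tmat, Matrix.of_apply, Fin.val_zero, Fin.val_succ]
        split_ifs <;> first | rfl | (exfalso; simp_all; omega) | (exfalso; simp_all) | (exfalso; omega)
      rw [h]; ring
    rw [Finset.sum_eq_zero (fun i _ => htail0 i)]
    have h00 : Tmat d (n + 2) 0 0 = d 0 := by simp [Tmat]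
    have hsub0 : (Tmat d (n + 2)).submatrix Fin.succ ((0 : Fin (n + 2)).succAbove)
        = Tmat (fun k => d (k + 1)) (n + 1) := by
      rw [Fin.succAbove_zero, Tmat_sub_succ]
    have h01 : Tmat d (n + 2) 0 1 = -1 := by simp [Tmat]
    set B := (Tmat d (n + 2)).submatrix Fin.succ ((1 : Fin (n + 2)).succAbove) with hB
    have hBdet : B.det = - cont n (fun k => d (k + 2)) := by
      rw [Matrix.det_succ_column_zero, Fin.sum_univ_succ]
      have htail1 : ∀ i : Fin n,
          (-1 : ℂ) ^ (((i.succ : Fin (n + 1))) : ℕ) * B i.succ 0 *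
            (B.submatrix (i.succ).succAbove Fin.succ).det = 0 := by
        intro i
        have h : B i.succ 0 = 0 := by
          simp only [hB, Matrix.submatrix_apply, Tmat, Matrix.of_apply, Fin.val_succ]
          rw [hval n 0]
          simp only [Fin.val_zero]
          simp only [if_true]
          split_ifs <;> first | rfl | (exfalso; omega) | (exfalso; simp_all; omega) | (exfalso; simp_all)
        rw [h]; ring
      rw [Finset.sum_eq_zero (fun i _ => htail1 i)]
      have hB00 : B 0 0 = -1 := by
        simp only [hB, Matrix.submatrix_apply, Tmat, Matrix.of_apply, Fin.val_succ]
        rw [hval n 0]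
        simp
      have hBsub : B.submatrix ((0 : Fin (n + 1)).succAbove) Fin.succ
          = Tmat (fun k => d (k + 2)) n := by
        rw [Fin.succAbove_zero]
        ext i j
        simp only [hB, Matrix.submatrix_apply, Tmat, Matrix.of_apply, Fin.val_succ]
        rw [hval n j.succ]
        simp only [Fin.val_succ]
        rw [if_neg (Nat.succ_ne_zero (j : ℕ))]
        split_ifs <;> first | rfl | (exfalso; omega)
      rw [hB00, hBsub, det_Tmat n (fun k => d (k + 2))]
      simp
    rw [Fin.succ_zero_eq_one, h00, hsub0, h01, hBdet, det_Tmat (n + 1) (fun k => d (k + 1))]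
    simp only [Fin.val_zero, pow_zero, Fin.val_one, pow_one, cont]
    ring

lemma chebU_zero (y : ℂ) : chebU 0 y = 1 := rfl
lemma chebU_one (y : ℂ) : chebU 1 y = 2 * y := rfl
lemma chebU_add_two (n : ℕ) (y : ℂ) :
    chebU (n + 2) y = 2 * y * chebU (n + 1) y - chebU n y := rfl

noncomputable def Mrec (b c : ℂ) : ℕ → ℂ
  | 0 => 1
  | 1 => b
  | n + 2 => c * Mrec b c (n + 1) - Mrec b c n

lemma cont_Mrec (b c : ℂ) : ∀ n, cont n (fun k => if k + 1 = n then b else c) = Mrec b c n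
  | 0 => by simp [cont, Mrec]
  | 1 => by simp [cont, Mrec]
  | n + 2 => by
    have e1 : (fun k => (fun k => if k + 1 = n + 2 then b else c) (k + 1))
        = fun k => if k + 1 = n + 1 then b else c := by
      funext k
      show (if k + 1 + 1 = n + 2 then b else c) = if k + 1 = n + 1 then b else c
      by_cases h : k + 1 = n + 1
      · rw [if_pos (by omega), if_pos h]
      · rw [if_neg (by omega), if_neg h]
    have e2 : (fun k => (fun k => if k + 1 = n + 2 then b else c) (k + 2))
        = fun k => if k + 1 = n then b else c := by
      funext k
      show (if k + 2 + 1 = n + 2 then b else c) = if k + 1 = n then b else c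
      by_cases h : k + 1 = n
      · rw [if_pos (by omega), if_pos h]
      · rw [if_neg (by omega), if_neg h]
    show (fun k => if k + 1 = n + 2 then b else c) 0 * cont (n + 1) _ - cont n _ = _
    rw [e1, e2, cont_Mrec b c (n + 1), cont_Mrec b c n]
    show (if 0 + 1 = n + 2 then b else c) * Mrec b c (n + 1) - Mrec b c n = Mrec b c (n + 2)
    rw [if_neg (by omega)]
    rfl

lemma Mrec_cheb (b u : ℂ) :
    ∀ k, Mrec b (2 * u) (k + 1) = chebU (k + 1) u + (b - 2 * u) * chebU k u
  | 0 => by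
    show b = chebU 1 u + (b - 2 * u) * chebU 0 u
    rw [chebU_zero, chebU_one]; ring
  | 1 => by
    show 2 * u * Mrec b (2 * u) 1 - Mrec b (2 * u) 0 = chebU 2 u + (b - 2 * u) * chebU 1 u
    rw [show (2 : ℕ) = 0 + 2 from rfl, chebU_add_two 0, chebU_zero, chebU_one]
    show 2 * u * b - 1 = _
    ring
  | k + 2 => by
    show 2 * u * Mrec b (2 * u) (k + 2) - Mrec b (2 * u) (k + 1) = _
    rw [Mrec_cheb b u (k + 1), Mrec_cheb b u k, chebU_add_two (k + 1), chebU_add_two k]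
    ring



/-- `det(H^{(N)}(ω) − λI) = P_{N,1+iω}(−λ/2)`; in particular `λ` is an eigenvalue of
`H^{(N)}(ω)` iff `−λ/2` is a root of `P_{N,1+iω}`. -/
theorem stmt12 (N : ℕ) (hN : 2 ≤ N) (ω : ℝ) (lam : ℂ) :
    (Hmat N ω - lam • (1 : Matrix (Fin N) (Fin N) ℂ)).det
        = Psec N (1 + Complex.I * ω) (-lam / 2) ∧
    ((∃ v : Fin N → ℂ, v ≠ 0 ∧ Hmat N ω *ᵥ v = lam • v) ↔
        Psec N (1 + Complex.I * ω) (-lam / 2) = 0) := by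
  have hz : starRingEnd ℂ (1 + Complex.I * (ω : ℂ)) = 1 - Complex.I * ω := by
    rw [map_add, _root_.map_one, _root_.map_mul, Complex.conj_I, Complex.conj_ofReal]
    ring
  set a : ℂ := -1 - Complex.I * ω - lam with ha
  set b : ℂ := -1 + Complex.I * ω - lam with hb
  have hM : Hmat N ω - lam • (1 : Matrix (Fin N) (Fin N) ℂ)
      = Tmat (fun k => if k = 0 then a else if k = N - 1 then b else -lam) N := by
    ext j k
    simp only [Matrix.sub_apply, Matrix.smul_apply, Matrix.one_apply, Hmat, Tmat,
      Matrix.of_apply, smul_eq_mul]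
    by_cases h1 : (j : ℕ) = (k : ℕ)
    · have hjk : j = k := Fin.ext h1
      subst hjk
      simp only [if_pos rfl, if_pos h1]
      split_ifs <;> ring
    · have hjk : ¬ j = k := fun h => h1 (by rw [h])
      simp only [if_neg h1, if_neg hjk]
      split_ifs <;> ring
  have hdet : (Hmat N ω - lam • (1 : Matrix (Fin N) (Fin N) ℂ)).det
      = Psec N (1 + Complex.I * ω) (-lam / 2) := by
    rw [hM, det_Tmat]
    obtain ⟨n, rfl⟩ : ∃ n, N = n + 2 := ⟨N - 2, by omega⟩
    have e1 : (fun k => (fun k => if k = 0 then a else if k = n + 2 - 1 then b else -lam) (k + 1))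
        = fun k => if k + 1 = n + 1 then b else -lam := by
      funext k
      show (if k + 1 = 0 then a else if k + 1 = n + 2 - 1 then b else -lam)
        = if k + 1 = n + 1 then b else -lam
      rw [if_neg (by omega)]
      by_cases h : k + 1 = n + 1
      · rw [if_pos (by omega), if_pos h]
      · rw [if_neg (by omega), if_neg h]
    have e2 : (fun k => (fun k => if k = 0 then a else if k = n + 2 - 1 then b else -lam) (k + 2))
        = fun k => if k + 1 = n then b else -lam := by
      funext k
      show (if k + 2 = 0 then a else if k + 2 = n + 2 - 1 then b else -lam)
        = if k + 1 = n then b else -lam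
      rw [if_neg (by omega)]
      by_cases h : k + 1 = n
      · rw [if_pos (by omega), if_pos h]
      · rw [if_neg (by omega), if_neg h]
    show (fun k => if k = 0 then a else if k = n + 2 - 1 then b else -lam) 0
        * cont (n + 1) _ - cont n _ = _
    rw [e1, e2, cont_Mrec, cont_Mrec]
    show (if 0 = 0 then a else _) * Mrec b (-lam) (n + 1) - Mrec b (-lam) n = _
    rw [if_pos rfl]
    have h2u : (2 : ℂ) * (-lam / 2) = -lam := by ring
    have key : ∀ m, Mrec b (-lam) (m + 1)
        = chebU (m + 1) (-lam / 2) + (b - -lam) * chebU m (-lam / 2) := by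
      intro m
      have h := Mrec_cheb b (-lam / 2) m
      rw [h2u] at h
      exact h
    have hPsec : Psec (n + 2) (1 + Complex.I * ω) (-lam / 2)
        = (1 + Complex.I * ω) * starRingEnd ℂ (1 + Complex.I * ω) * chebU n (-lam / 2)
          - ((1 + Complex.I * ω) + starRingEnd ℂ (1 + Complex.I * ω)) * chebU (n + 1) (-lam / 2)
          + chebU (n + 2) (-lam / 2) := rfl
    rw [hPsec, hz]
    cases n with
    | zero =>
      rw [key 0, show Mrec b (-lam) 0 = 1 from rfl, chebU_add_two 0, chebU_zero, chebU_one,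
        ha, hb]
      ring
    | succ m =>
      rw [key (m + 1), key m, chebU_add_two (m + 1), chebU_add_two m, ha, hb]
      ring
  refine ⟨hdet, ?_⟩
  rw [← hdet, ← Matrix.exists_mulVec_eq_zero_iff]
  simp only [Matrix.sub_mulVec, Matrix.smul_mulVec, Matrix.one_mulVec, sub_eq_zero]
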